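/- arXiv:2311.15651 — 3 statements merged into one kernel-verified Lean document; each statement's English description precedes it below -/
import Mathlib

section
/- Let α ∈ (0,1), c > 0, let f be continuous, and let φ ∈ C²_b(ℝ) be a strictly increasing function satisfying c^α ∂^α_ξ φ(ξ) = φ''(ξ) + f(φ(ξ)) for all ξ ∈ ℝ. Then v(t,x) := φ(x + ct) is a strict sub-solution of the time-fractional equation: for every t > 0 and x ∈ ℝ, the Caputo derivative (1/Γ(1-α)) ∫₀^t (∂v/∂s)(s,x) (t-s)^{-α} ds, which equals (c^α/Γ(1-α)) ∫₀^{ct} φ'(x + ct - s) s^{-α} ds, is strictly less than φ''(x + ct) + f(φ(x + ct)). -/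
open Real MeasureTheory Filter Topology

/-- The fractional derivative ∂^α_ξ ψ(ξ) := (1/Γ(1-α)) ∫₀^∞ ψ'(ξ - s) s^{-α} ds. -/
noncomputable def fracD (α : ℝ) (ψ : ℝ → ℝ) (ξ : ℝ) : ℝ :=
  (1 / Real.Gamma (1 - α)) * ∫ s in Set.Ioi (0 : ℝ), deriv ψ (ξ - s) / s ^ α

/-- The critical speed c*_α = (2^{1/α}/√α) (r/(2-α))^{(2-α)/(2α)}. -/
noncomputable def cStar (α r : ℝ) : ℝ :=
  ((2 : ℝ) ^ (1 / α) / Real.sqrt α) * (r / (2 - α)) ^ ((2 - α) / (2 * α))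

/-- ψ ∈ C²_b(ℝ): twice continuously differentiable with bounded derivatives up to order 2. -/
def C2b (ψ : ℝ → ℝ) : Prop :=
  ContDiff ℝ 2 ψ ∧ (∃ C, ∀ x, |ψ x| ≤ C) ∧ (∃ C, ∀ x, |deriv ψ x| ≤ C) ∧
    ∃ C, ∀ x, |deriv (deriv ψ) x| ≤ C

/-- The monostable KPP assumption with constants `M`, `a`. -/
def KPP (f : ℝ → ℝ) (M a : ℝ) : Prop :=
  ContDiff ℝ 1 f ∧ f 0 = 0 ∧ f 1 = 0 ∧ (∀ u, 0 < u → u < 1 → 0 < f u) ∧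
    0 < M ∧ 0 < a ∧ ∀ u ∈ Set.Icc (0 : ℝ) 1,
      -M * u ^ (1 + a) ≤ f u - deriv f 0 * u ∧ f u - deriv f 0 * u ≤ 0

section AuxLemmas
open Set

lemma aux_deriv_nonneg {φ : ℝ → ℝ} (hm : Monotone φ) (hd : Differentiable ℝ φ) (x : ℝ) :
    0 ≤ deriv φ x := by
  have h := (hd x).hasDerivAt
  rw [hasDerivAt_iff_tendsto_slope] at h
  have h' : Tendsto (slope φ x) (𝓝[>] x) (𝓝 (deriv φ x)) :=
    h.mono_left (nhdsWithin_mono x fun y hy => ne_of_gt hy)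
  refine ge_of_tendsto h' ?_
  filter_upwards [self_mem_nhdsWithin] with y hy
  rw [slope_def_field]
  exact div_nonneg (sub_nonneg.2 (hm hy.le)) (sub_nonneg.2 hy.le)

lemma aux_tail_int {φ : ℝ → ℝ} (hm : Monotone φ) (hd : Differentiable ℝ φ)
    (hb : ∃ C, ∀ x, |φ x| ≤ C) (ξ A : ℝ) :
    IntegrableOn (fun s => deriv φ (ξ - s)) (Set.Ioi A) := by
  obtain ⟨C, hC⟩ := hb
  have hbdd : BddBelow (Set.range φ) :=
    ⟨-C, fun y ⟨x, hx⟩ => hx ▸ neg_le_of_abs_le (hC x)⟩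
  have h1 : Tendsto (fun s : ℝ => ξ - s) atTop atBot := by
    simpa [sub_eq_add_neg] using tendsto_atBot_add_const_left atTop ξ tendsto_neg_atTop_atBot
  have h3 : Tendsto (fun s => -φ (ξ - s)) atTop (𝓝 (-(⨅ y, φ y))) :=
    ((tendsto_atBot_ciInf hm hbdd).comp h1).neg
  refine integrableOn_Ioi_deriv_of_nonneg' (g := fun s => -φ (ξ - s)) ?_ ?_ h3
  · intro s _
    have h4 : HasDerivAt (fun y : ℝ => ξ - y) (-1) s := (hasDerivAt_id s).const_sub ξ
    have h5 := ((hd (ξ - s)).hasDerivAt.comp s h4).neg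
    have h6 : -(deriv φ (ξ - s) * -1) = deriv φ (ξ - s) := by ring
    rw [h6] at h5
    exact h5
  · intro s _
    exact aux_deriv_nonneg hm hd _

lemma aux_meas {φ : ℝ → ℝ} (hc' : Continuous (deriv φ)) (ξ α : ℝ) (hα0 : 0 < α) :
    AEStronglyMeasurable (fun s : ℝ => deriv φ (ξ - s) / s ^ α) volume := by
  exact (((hc'.comp (continuous_const.sub continuous_id)).measurable).div
    ((Real.continuous_rpow_const hα0.le).measurable)).aestronglyMeasurable

lemma aux_int_Ioc {φ : ℝ → ℝ} (hc' : Continuous (deriv φ)) {C : ℝ} (hC : ∀ x, |deriv φ x| ≤ C)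
    (ξ α A : ℝ) (hα0 : 0 < α) (hα1 : α < 1) (hA : 0 < A) :
    IntegrableOn (fun s => deriv φ (ξ - s) / s ^ α) (Set.Ioc 0 A) := by
  have hC0 : 0 ≤ C := le_trans (abs_nonneg _) (hC 0)
  have hD : IntegrableOn (fun s : ℝ => C * s ^ (-α)) (Set.Ioc 0 A) := by
    have h1 : IntervalIntegrable (fun s : ℝ => s ^ (-α)) volume 0 A :=
      intervalIntegral.intervalIntegrable_rpow' (by linarith)
    rw [intervalIntegrable_iff_integrableOn_Ioc_of_le hA.le] at h1
    exact h1.const_mul C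
  refine hD.integrable.mono ((aux_meas hc' ξ α hα0).restrict) ?_
  rw [ae_restrict_iff' measurableSet_Ioc]
  filter_upwards with s hs
  have hsα : 0 < s ^ α := Real.rpow_pos_of_pos hs.1 α
  have h2 : s ^ (-α) = (s ^ α)⁻¹ := Real.rpow_neg hs.1.le α
  rw [Real.norm_eq_abs, Real.norm_eq_abs, abs_div, abs_of_pos hsα]
  calc |deriv φ (ξ - s)| / s ^ α ≤ C / s ^ α := by gcongr; exact hC _
    _ = C * s ^ (-α) := by rw [h2, div_eq_mul_inv]
    _ ≤ |C * s ^ (-α)| := le_abs_self _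

lemma aux_int_Ioi {φ : ℝ → ℝ} (hm : Monotone φ) (hd : Differentiable ℝ φ)
    (hc' : Continuous (deriv φ)) (hb : ∃ C, ∀ x, |φ x| ≤ C)
    (ξ α A : ℝ) (hα0 : 0 < α) (hA : 0 < A) :
    IntegrableOn (fun s => deriv φ (ξ - s) / s ^ α) (Set.Ioi A) := by
  have hD : IntegrableOn (fun s : ℝ => deriv φ (ξ - s) / A ^ α) (Set.Ioi A) :=
    (aux_tail_int hm hd hb ξ A).div_const _
  refine hD.integrable.mono ((aux_meas hc' ξ α hα0).restrict) ?_
  rw [ae_restrict_iff' measurableSet_Ioi]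
  filter_upwards with s hs
  have hs0 : 0 < s := hA.trans hs
  have hAα : 0 < A ^ α := Real.rpow_pos_of_pos hA α
  have hφ' : 0 ≤ deriv φ (ξ - s) := aux_deriv_nonneg hm hd _
  rw [Real.norm_eq_abs, Real.norm_eq_abs, abs_div, abs_div,
    abs_of_pos (Real.rpow_pos_of_pos hs0 α), abs_of_pos hAα, abs_of_nonneg hφ']
  gcongr
  exact hs.le

end AuxLemmas

/-- An asymptotic traveling wave profile yields a strict sub-solution `v(t,x) = φ(x+ct)`:
the Caputo derivative of `v` in time equals the truncated moving-frame fractional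
derivative and is strictly below `φ'' + f(φ)` at the moving coordinate. -/
theorem asymptotic_traveling_wave_is_strict_subsolution
    (α : ℝ) (hα : α ∈ Set.Ioo (0 : ℝ) 1) (c : ℝ) (hc : 0 < c)
    (f : ℝ → ℝ) (hf : Continuous f)
    (φ : ℝ → ℝ) (hφ : C2b φ) (hmono : StrictMono φ)
    (heq : ∀ ξ, c ^ α * fracD α φ ξ = deriv (deriv φ) ξ + f (φ ξ)) :
    ∀ t > (0 : ℝ), ∀ x : ℝ,
      ((1 / Real.Gamma (1 - α)) *
          ∫ s in Set.Ioc (0 : ℝ) t, deriv (fun τ => φ (x + c * τ)) s / (t - s) ^ α)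
        = ((c ^ α / Real.Gamma (1 - α)) *
            ∫ s in Set.Ioc (0 : ℝ) (c * t), deriv φ (x + c * t - s) / s ^ α) ∧
      ((c ^ α / Real.Gamma (1 - α)) *
          ∫ s in Set.Ioc (0 : ℝ) (c * t), deriv φ (x + c * t - s) / s ^ α)
        < deriv (deriv φ) (x + c * t) + f (φ (x + c * t)) := by
  intro t ht x
  obtain ⟨hα0, hα1⟩ := hα
  have hΓ : 0 < Real.Gamma (1 - α) := Real.Gamma_pos_of_pos (by linarith)
  have hdφ : Differentiable ℝ φ := hφ.1.differentiable (by norm_num)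
  have hc' : Continuous (deriv φ) := hφ.1.continuous_deriv (by norm_num)
  obtain ⟨C, hC⟩ := hφ.2.2.1
  have hA : 0 < c * t := mul_pos hc ht
  set ξ := x + c * t with hξ
  set G : ℝ → ℝ := fun s => deriv φ (ξ - s) / s ^ α with hG
  have I1 : IntegrableOn G (Set.Ioc 0 (c * t)) := aux_int_Ioc hc' hC ξ α (c * t) hα0 hα1 hA
  have I2 : IntegrableOn G (Set.Ioi (c * t)) :=
    aux_int_Ioi hmono.monotone hdφ hc' hφ.2.1 ξ α (c * t) hα0 hA
  have hunion : Set.Ioc (0:ℝ) (c * t) ∪ Set.Ioi (c * t) = Set.Ioi (0:ℝ) :=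
    Set.Ioc_union_Ioi_eq_Ioi hA.le
  have hsplit : (∫ s in Set.Ioi (0:ℝ), G s) =
      (∫ s in Set.Ioc (0:ℝ) (c * t), G s) + ∫ s in Set.Ioi (c * t), G s := by
    rw [← hunion, setIntegral_union (Set.Ioc_disjoint_Ioi le_rfl) measurableSet_Ioi I1 I2]
  -- tail is positive
  have htail : 0 < ∫ s in Set.Ioi (c * t), G s := by
    obtain ⟨z, hz, hz'⟩ := exists_deriv_eq_slope φ
      (show ξ - (c*t) - 2 < ξ - (c*t) - 1 by linarith)
      hdφ.continuous.continuousOn hdφ.differentiableOn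
    have hφz : 0 < deriv φ z := by
      rw [hz']
      apply div_pos (sub_pos.2 (hmono (by linarith))) (by linarith)
    set s₀ := ξ - z with hs₀def
    have hs₀ : c * t < s₀ := by
      have := hz.2; simp only [hs₀def]; linarith [hz.2]
    have harg : ξ - s₀ = z := by simp [hs₀def]
    have hg0 : 0 < G s₀ := by
      rw [hG]; simp only [harg]
      exact div_pos hφz (Real.rpow_pos_of_pos (by linarith) α)
    have hgc : ContinuousAt G s₀ := by
      apply ContinuousAt.div
      · exact (hc'.comp (continuous_const.sub continuous_id)).continuousAt
      · exact (Real.continuous_rpow_const hα0.le).continuousAt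
      · exact ne_of_gt (Real.rpow_pos_of_pos (by linarith) α)
    have hmem : G ⁻¹' Set.Ioi 0 ∈ 𝓝 s₀ := hgc.preimage_mem_nhds (Ioi_mem_nhds hg0)
    obtain ⟨V, hV1, hV2, hV3⟩ := mem_nhds_iff.1 hmem
    rw [setIntegral_pos_iff_support_of_nonneg_ae ?_ I2]
    · refine lt_of_lt_of_le ((hV2.inter isOpen_Ioi).measure_pos volume ⟨s₀, hV3, hs₀⟩)
        (measure_mono ?_)
      rintro y ⟨hy1, hy2⟩
      exact ⟨ne_of_gt (hV1 hy1), hy2⟩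
    · rw [Filter.EventuallyLE, ae_restrict_iff' measurableSet_Ioi]
      filter_upwards with s hs
      exact div_nonneg (aux_deriv_nonneg hmono.monotone hdφ _)
        (Real.rpow_nonneg (by linarith [hA.trans hs]) α)
  have hcα : 0 < c ^ α := Real.rpow_pos_of_pos hc α
  have hkey : c ^ α * ((1 / Real.Gamma (1 - α)) * ∫ s in Set.Ioi (0:ℝ), G s)
      = deriv (deriv φ) ξ + f (φ ξ) := heq ξ
  -- the inequality part
  have hineq : (c ^ α / Real.Gamma (1 - α)) * (∫ s in Set.Ioc (0:ℝ) (c * t), G s)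
      < deriv (deriv φ) ξ + f (φ ξ) := by
    rw [← hkey, hsplit]
    have h1 : 0 < c ^ α * ((1 / Real.Gamma (1 - α)) * ∫ s in Set.Ioi (c * t), G s) := by
      apply mul_pos hcα (mul_pos (by positivity) htail)
    have h2 : c ^ α * ((1 / Real.Gamma (1 - α)) *
        ((∫ s in Set.Ioc (0:ℝ) (c * t), G s) + ∫ s in Set.Ioi (c * t), G s))
        = (c ^ α / Real.Gamma (1 - α)) * (∫ s in Set.Ioc (0:ℝ) (c * t), G s)
          + c ^ α * ((1 / Real.Gamma (1 - α)) * ∫ s in Set.Ioi (c * t), G s) := by ring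
    rw [h2]
    linarith
  refine ⟨?_, hineq⟩
  -- the equality part
  have hderiv_eq : ∀ s : ℝ, deriv (fun τ => φ (x + c * τ)) s = c * deriv φ (x + c * s) := by
    intro s
    have h4 : HasDerivAt (fun τ : ℝ => x + c * τ) c s := by
      simpa using ((hasDerivAt_id s).const_mul c).const_add x
    have h5 := (hdφ (x + c * s)).hasDerivAt.comp s h4
    simpa [Function.comp_def, mul_comm] using h5.deriv
  set F : ℝ → ℝ := fun u => c * deriv φ (ξ - c * u) / u ^ α with hF
  have e0 : (∫ s in Set.Ioc (0:ℝ) t, deriv (fun τ => φ (x + c * τ)) s / (t - s) ^ α)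
      = ∫ s in (0:ℝ)..t, F (t - s) := by
    rw [← intervalIntegral.integral_of_le ht.le]
    refine intervalIntegral.integral_congr fun s _ => ?_
    rw [hderiv_eq s]
    show c * deriv φ (x + c * s) / (t - s) ^ α = c * deriv φ (ξ - c * (t - s)) / (t - s) ^ α
    have : ξ - c * (t - s) = x + c * s := by rw [hξ]; ring
    rw [this]
  have e3 : (∫ s in (0:ℝ)..t, F (t - s)) = ∫ u in (0:ℝ)..t, F u := by
    simpa using intervalIntegral.integral_comp_sub_left F t
  have e6 : (∫ u in (0:ℝ)..t, F u) = ∫ u in (0:ℝ)..t, (c * c ^ α) * G (c * u) := by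
    refine intervalIntegral.integral_congr fun u hu => ?_
    rw [Set.uIcc_of_le ht.le] at hu
    have hu0 : (0:ℝ) ≤ u := hu.1
    rw [hF, hG]
    simp only
    rw [Real.mul_rpow hc.le hu0, ← div_div, mul_div_assoc']
    congr 1
    field_simp
  have e8 : (∫ u in (0:ℝ)..t, G (c * u)) = c⁻¹ • ∫ s in (0:ℝ)..(c*t), G s := by
    simpa using intervalIntegral.integral_comp_mul_left (a := 0) (b := t) G hc.ne'
  have e9 : (∫ s in (0:ℝ)..(c*t), G s) = ∫ s in Set.Ioc (0:ℝ) (c*t), G s :=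
    intervalIntegral.integral_of_le hA.le
  rw [e0, e3, e6, intervalIntegral.integral_const_mul, e8, e9]
  rw [smul_eq_mul]
  field_simp
end

section
/- Let α ∈ (0,1), c > 0, κ > 0, and suppose ψ ∈ C¹_b(ℝ) ∩ C²(ℝ) satisfies L ψ(ξ) ≤ 0 for all ξ ∈ ℝ, liminf_{ξ→-∞} ψ(ξ) ≥ 0 and limsup_{ξ→+∞} ψ(ξ) ≥ 0. Then ψ(ξ) ≥ 0 for all ξ ∈ ℝ. Furthermore, if ψ(ξ*) = 0 for some ξ* ∈ ℝ, then ψ(ξ) = 0 for all ξ ≤ ξ*. -/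
open Real MeasureTheory Filter Topology

/-- ψ ∈ C¹_b(ℝ): continuously differentiable, bounded together with its derivative. -/
def C1b (ψ : ℝ → ℝ) : Prop :=
  ContDiff ℝ 1 ψ ∧ (∃ C, ∀ x, |ψ x| ≤ C) ∧ ∃ C, ∀ x, |deriv ψ x| ≤ C

namespace MaxPrinAux

open Set

lemma lip {ψ : ℝ → ℝ} {C : ℝ} (h1 : Differentiable ℝ ψ)
    (hC : ∀ x, |deriv ψ x| ≤ C) (x y : ℝ) : |ψ x - ψ y| ≤ C * |x - y| := by
  have := convex_univ.norm_image_sub_le_of_norm_deriv_le (f := ψ) (fun z _ => h1 z)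
    (fun z _ => by simpa [Real.norm_eq_abs] using hC z) (mem_univ y) (mem_univ x)
  simpa [Real.norm_eq_abs] using this

lemma hasDerivAt_F {ψ : ℝ → ℝ} (hdiff : Differentiable ℝ ψ) (ξ s : ℝ) :
    HasDerivAt (fun s => ψ ξ - ψ (ξ - s)) (deriv ψ (ξ - s)) s := by
  have inner : HasDerivAt (fun s : ℝ => ξ - s) (-1) s := by
    simpa using (hasDerivAt_id s).const_sub ξ
  have outer : HasDerivAt (fun s => ψ (ξ - s)) (deriv ψ (ξ - s) * (-1)) s :=
    ((hdiff (ξ - s)).hasDerivAt).comp s inner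
  have := outer.const_sub (ψ ξ)
  simpa using this

lemma union_Ioi_inv : (⋃ n : ℕ, Set.Ioi ((n + 1 : ℝ)⁻¹)) = Set.Ioi (0:ℝ) := by
  ext x
  simp only [Set.mem_iUnion, Set.mem_Ioi]
  constructor
  · rintro ⟨n, hn⟩
    exact lt_trans (by positivity) hn
  · intro hx
    obtain ⟨n, hn⟩ := exists_nat_gt x⁻¹
    refine ⟨n, ?_⟩
    have h1 : x⁻¹ < (n:ℝ) + 1 := lt_trans hn (by linarith)
    have h2 : ((n:ℝ)+1)⁻¹ < (x⁻¹)⁻¹ := by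
      apply inv_strictAnti₀ (by positivity) h1
    simpa using h2


lemma integrableOn_kernel {α : ℝ} (hα : 0 < α) (hα1 : α < 1) {f : ℝ → ℝ}
    (hf : Continuous f) {C M : ℝ}
    (h0 : ∀ s ∈ Set.Ioc (0:ℝ) 1, |f s| ≤ C * s) (hinf : ∀ s ∈ Set.Ioi (1:ℝ), |f s| ≤ M) :
    IntegrableOn (fun s => f s * s ^ (-1-α)) (Set.Ioi (0:ℝ)) := by
  have hmeas : ∀ (t : Set ℝ), AEStronglyMeasurable (fun s => f s * s ^ (-1-α))
      (volume.restrict t) := by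
    intro t
    exact ((hf.measurable.mul (measurable_id.pow_const _)).aestronglyMeasurable).restrict
  rw [← Set.Ioc_union_Ioi_eq_Ioi (zero_le_one)]
  refine MeasureTheory.IntegrableOn.union ?_ ?_
  · have hint : IntegrableOn (fun s : ℝ => C * s ^ (-α)) (Set.Ioc (0:ℝ) 1) := by
      have h1 : IntervalIntegrable (fun x : ℝ => x ^ (-α)) volume 0 1 :=
        intervalIntegral.intervalIntegrable_rpow' (by linarith)
      rw [intervalIntegrable_iff_integrableOn_Ioc_of_le zero_le_one] at h1
      exact h1.const_mul C
    refine hint.mono' (hmeas _) ?_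
    filter_upwards [ae_restrict_mem measurableSet_Ioc] with s hs
    have hs0 : (0:ℝ) < s := hs.1
    have : |f s * s ^ (-1-α)| = |f s| * s ^ (-1-α) := by
      rw [abs_mul, abs_of_nonneg (Real.rpow_nonneg hs0.le _)]
    rw [Real.norm_eq_abs, this]
    calc |f s| * s ^ (-1-α) ≤ (C * s) * s ^ (-1-α) := by
          apply mul_le_mul_of_nonneg_right (h0 s hs) (Real.rpow_nonneg hs0.le _)
      _ = C * s ^ (-α) := by
          rw [mul_assoc]
          congr 1
          rw [← Real.rpow_one_add' hs0.le (by linarith)]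
          ring_nf
  · have hint : IntegrableOn (fun s : ℝ => M * s ^ (-1-α)) (Set.Ioi (1:ℝ)) := by
      exact (integrableOn_Ioi_rpow_of_lt (by linarith) one_pos).const_mul M
    refine hint.mono' (hmeas _) ?_
    filter_upwards [ae_restrict_mem measurableSet_Ioi] with s hs
    have hs0 : (0:ℝ) < s := lt_trans one_pos hs
    rw [Real.norm_eq_abs, abs_mul, abs_of_nonneg (Real.rpow_nonneg hs0.le _)]
    exact mul_le_mul_of_nonneg_right (hinf s hs) (Real.rpow_nonneg hs0.le _)

/-- Integrability of the difference kernel `(ψ ξ - ψ (ξ - s)) s^{-1-α}`. -/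
lemma integrableOn_diff_kernel {α : ℝ} (hα : 0 < α) (hα1 : α < 1) {ψ : ℝ → ℝ} {C M : ℝ}
    (h1 : ContDiff ℝ 1 ψ) (hM : ∀ x, |ψ x| ≤ M) (hC : ∀ x, |deriv ψ x| ≤ C) (ξ : ℝ) :
    IntegrableOn (fun s => (ψ ξ - ψ (ξ - s)) * s ^ (-1-α)) (Set.Ioi (0:ℝ)) := by
  refine integrableOn_kernel hα hα1 ?_ (C := C) (M := 2*M) ?_ ?_
  · exact (continuous_const.sub (h1.continuous.comp (continuous_const.sub continuous_id)))
  · intro s hs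
    have := lip (h1.differentiable one_ne_zero) hC ξ (ξ - s)
    have habs : |ξ - (ξ - s)| = s := by
      rw [show ξ - (ξ - s) = s by ring, abs_of_pos hs.1]
    rw [habs] at this
    exact this
  · intro s _
    calc |ψ ξ - ψ (ξ - s)| ≤ |ψ ξ| + |ψ (ξ - s)| := abs_sub _ _
      _ ≤ M + M := add_le_add (hM _) (hM _)
      _ = 2 * M := by ring


lemma ibp_step {α : ℝ} (hα : 0 < α) (hα1 : α < 1) {ψ : ℝ → ℝ} {C M : ℝ}
    (h1 : ContDiff ℝ 1 ψ) (hM : ∀ x, |ψ x| ≤ M) (hC : ∀ x, |deriv ψ x| ≤ C) (ξ : ℝ)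
    (hint : IntegrableOn (fun s => deriv ψ (ξ - s) / s ^ α) (Set.Ioi (0:ℝ)))
    {a : ℝ} (ha : 0 < a) :
    ∫ s in Set.Ioi a, deriv ψ (ξ - s) / s ^ α
      = -((ψ ξ - ψ (ξ - a)) * a ^ (-α))
        + α * ∫ s in Set.Ioi a, (ψ ξ - ψ (ξ - s)) * s ^ (-1-α) := by
  have hdiff : Differentiable ℝ ψ := h1.differentiable one_ne_zero
  have hdψ : Continuous (deriv ψ) := h1.continuous_deriv le_rfl
  set g : ℝ → ℝ := fun s => deriv ψ (ξ - s) / s ^ α with hg_def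
  set K : ℝ → ℝ := fun s => (ψ ξ - ψ (ξ - s)) * s ^ (-1-α) with hK_def
  set H : ℝ → ℝ := fun s => (ψ ξ - ψ (ξ - s)) * s ^ (-α) with hH_def
  have hK_int : IntegrableOn K (Set.Ioi (0:ℝ)) :=
    integrableOn_diff_kernel hα hα1 h1 hM hC ξ
  -- continuity facts on sets avoiding 0
  have hgc : ∀ t : Set ℝ, (∀ s ∈ t, (0:ℝ) < s) → ContinuousOn g t := by
    intro t ht
    apply ContinuousOn.div
    · exact ((hdψ.comp (continuous_const.sub continuous_id)).continuousOn)
    · exact ContinuousOn.rpow_const continuousOn_id (fun s hs => Or.inl (ht s hs).ne')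
    · intro s hs
      exact (Real.rpow_pos_of_pos (ht s hs) α).ne'
  have hKc : ∀ t : Set ℝ, (∀ s ∈ t, (0:ℝ) < s) → ContinuousOn K t := by
    intro t ht
    apply ContinuousOn.mul
    · exact (continuous_const.sub (h1.continuous.comp
        (continuous_const.sub continuous_id))).continuousOn
    · exact ContinuousOn.rpow_const continuousOn_id (fun s hs => Or.inl (ht s hs).ne')
  -- the identity on finite intervals
  have Eab : ∀ b : ℝ, a ≤ b → ∫ s in a..b, g s = H b - H a + α * ∫ s in a..b, K s := by
    intro b hb
    have huIcc : Set.uIcc a b = Set.Icc a b := Set.uIcc_of_le hb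
    have hpos : ∀ s ∈ Set.uIcc a b, (0:ℝ) < s := by
      intro s hs
      rw [huIcc] at hs
      exact lt_of_lt_of_le ha hs.1
    have hderivH : ∀ s ∈ Set.uIcc a b, HasDerivAt H (g s + (-α) * K s) s := by
      intro s hs
      have hs0 : (0:ℝ) < s := hpos s hs
      have h1' := (hasDerivAt_F hdiff ξ s).mul
        (Real.hasDerivAt_rpow_const (p := -α) (Or.inl hs0.ne'))
      convert h1' using 1
      · rfl
      · rfl
      · rfl
      have e1 : g s = deriv ψ (ξ - s) * s ^ (-α) := by
        rw [hg_def]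
        simp only []
        rw [Real.rpow_neg hs0.le, div_eq_mul_inv]
      have e2 : (-α) * K s = (ψ ξ - ψ (ξ - s)) * ((-α) * s ^ (-α - 1)) := by
        rw [hK_def]
        simp only []
        rw [show (-α - 1 : ℝ) = -1 - α by ring]
        ring
      rw [e1, e2]
    have hcont : ContinuousOn (fun s => g s + (-α) * K s) (Set.uIcc a b) := by
      exact (hgc _ hpos).add (continuousOn_const.mul (hKc _ hpos))
    have hFTC := intervalIntegral.integral_eq_sub_of_hasDerivAt hderivH
      (hcont.intervalIntegrable)
    have hgI : IntervalIntegrable g volume a b := (hgc _ hpos).intervalIntegrable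
    have hKI : IntervalIntegrable K volume a b := (hKc _ hpos).intervalIntegrable
    rw [intervalIntegral.integral_add hgI (hKI.const_mul _)] at hFTC
    rw [intervalIntegral.integral_const_mul] at hFTC
    have : ∫ s in a..b, g s = H b - H a - (-α) * ∫ s in a..b, K s := by linarith
    rw [this]; ring
  -- limits as b → ∞
  have T1 : Tendsto (fun b => ∫ s in a..b, g s) atTop (𝓝 (∫ s in Set.Ioi a, g s)) :=
    intervalIntegral_tendsto_integral_Ioi a (hint.mono_set (Set.Ioi_subset_Ioi ha.le))
      tendsto_id
  have T2 : Tendsto (fun b => ∫ s in a..b, K s) atTop (𝓝 (∫ s in Set.Ioi a, K s)) :=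
    intervalIntegral_tendsto_integral_Ioi a (hK_int.mono_set (Set.Ioi_subset_Ioi ha.le))
      tendsto_id
  have T3 : Tendsto H atTop (𝓝 0) := by
    apply squeeze_zero_norm' (a := fun b => (2*M) * b ^ (-α))
    · filter_upwards [eventually_ge_atTop (1:ℝ)] with b hb
      have hb0 : (0:ℝ) < b := lt_of_lt_of_le one_pos hb
      rw [hH_def]
      simp only [Real.norm_eq_abs]
      rw [abs_mul, abs_of_nonneg (Real.rpow_nonneg hb0.le _)]
      refine mul_le_mul_of_nonneg_right ?_ (Real.rpow_nonneg hb0.le _)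
      calc |ψ ξ - ψ (ξ - b)| ≤ |ψ ξ| + |ψ (ξ - b)| := abs_sub _ _
        _ ≤ M + M := add_le_add (hM _) (hM _)
        _ = 2 * M := by ring
    · have := (tendsto_rpow_neg_atTop hα).const_mul (2*M)
      simpa using this
  have T : Tendsto (fun b => H b - H a + α * ∫ s in a..b, K s) atTop
      (𝓝 (0 - H a + α * ∫ s in Set.Ioi a, K s)) :=
    (T3.sub_const (H a)).add (T2.const_mul α)
  have heq : (fun b => ∫ s in a..b, g s) =ᶠ[atTop]
      (fun b => H b - H a + α * ∫ s in a..b, K s) := by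
    filter_upwards [eventually_ge_atTop a] with b hb
    exact Eab b hb
  have := tendsto_nhds_unique (T1) (T.congr' heq.symm)
  rw [this, hH_def]
  ring_nf


lemma ibp {α : ℝ} (hα : 0 < α) (hα1 : α < 1) {ψ : ℝ → ℝ} {C M : ℝ}
    (h1 : ContDiff ℝ 1 ψ) (hM : ∀ x, |ψ x| ≤ M) (hC : ∀ x, |deriv ψ x| ≤ C) (ξ : ℝ)
    (hint : IntegrableOn (fun s => deriv ψ (ξ - s) / s ^ α) (Set.Ioi (0:ℝ))) :
    ∫ s in Set.Ioi (0:ℝ), deriv ψ (ξ - s) / s ^ α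
      = α * ∫ s in Set.Ioi (0:ℝ), (ψ ξ - ψ (ξ - s)) * s ^ (-1-α) := by
  have hdiff : Differentiable ℝ ψ := h1.differentiable one_ne_zero
  set g : ℝ → ℝ := fun s => deriv ψ (ξ - s) / s ^ α with hg_def
  set K : ℝ → ℝ := fun s => (ψ ξ - ψ (ξ - s)) * s ^ (-1-α) with hK_def
  have hK_int : IntegrableOn K (Set.Ioi (0:ℝ)) :=
    integrableOn_diff_kernel hα hα1 h1 hM hC ξ
  set aseq : ℕ → ℝ := fun n => ((n:ℝ)+1)⁻¹ with haseq_def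
  have haseq_pos : ∀ n, 0 < aseq n := fun n => by positivity
  have haseq_to : Tendsto aseq atTop (𝓝 0) := by
    have := tendsto_one_div_add_atTop_nhds_zero_nat (𝕜 := ℝ)
    simpa [haseq_def, one_div] using this
  have hmono : Monotone (fun n : ℕ => Set.Ioi (aseq n)) := by
    intro n m hnm
    apply Set.Ioi_subset_Ioi
    apply inv_anti₀ (by positivity)
    have : (n:ℝ) ≤ (m:ℝ) := Nat.cast_le.mpr hnm
    linarith
  have hunion : (⋃ n : ℕ, Set.Ioi (aseq n)) = Set.Ioi (0:ℝ) := union_Ioi_inv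
  have A1 : Tendsto (fun n => ∫ s in Set.Ioi (aseq n), g s) atTop
      (𝓝 (∫ s in Set.Ioi (0:ℝ), g s)) := by
    have := tendsto_setIntegral_of_monotone (fun n : ℕ => measurableSet_Ioi) hmono
      (by rw [hunion]; exact hint)
    rwa [hunion] at this
  have A2 : Tendsto (fun n => ∫ s in Set.Ioi (aseq n), K s) atTop
      (𝓝 (∫ s in Set.Ioi (0:ℝ), K s)) := by
    have := tendsto_setIntegral_of_monotone (fun n : ℕ => measurableSet_Ioi) hmono
      (by rw [hunion]; exact hK_int)
    rwa [hunion] at this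
  have A3 : Tendsto (fun n => (ψ ξ - ψ (ξ - aseq n)) * (aseq n) ^ (-α)) atTop (𝓝 0) := by
    apply squeeze_zero_norm' (a := fun n => C * (aseq n) ^ (1-α))
    · filter_upwards with n
      have hpos := haseq_pos n
      rw [Real.norm_eq_abs, abs_mul, abs_of_nonneg (Real.rpow_nonneg hpos.le _)]
      have hlip : |ψ ξ - ψ (ξ - aseq n)| ≤ C * aseq n := by
        have := lip hdiff hC ξ (ξ - aseq n)
        rwa [show ξ - (ξ - aseq n) = aseq n by ring, abs_of_pos hpos] at this
      calc |ψ ξ - ψ (ξ - aseq n)| * (aseq n) ^ (-α)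
          ≤ (C * aseq n) * (aseq n) ^ (-α) :=
            mul_le_mul_of_nonneg_right hlip (Real.rpow_nonneg hpos.le _)
        _ = C * (aseq n) ^ (1-α) := by
            rw [mul_assoc]
            congr 1
            rw [← Real.rpow_one_add' hpos.le (by linarith)]
            ring_nf
    · have hcont : ContinuousAt (fun x : ℝ => x ^ (1-α)) 0 :=
        Real.continuousAt_rpow_const 0 (1-α) (Or.inr (by linarith))
      have := (hcont.tendsto.comp haseq_to).const_mul C
      simpa [Real.zero_rpow (show (1:ℝ)-α ≠ 0 by linarith)] using this
  have eqn : ∀ n, ∫ s in Set.Ioi (aseq n), g s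
      = -((ψ ξ - ψ (ξ - aseq n)) * (aseq n) ^ (-α)) + α * ∫ s in Set.Ioi (aseq n), K s :=
    fun n => ibp_step hα hα1 h1 hM hC ξ hint (haseq_pos n)
  have T : Tendsto (fun n => -((ψ ξ - ψ (ξ - aseq n)) * (aseq n) ^ (-α))
      + α * ∫ s in Set.Ioi (aseq n), K s) atTop
      (𝓝 (-0 + α * ∫ s in Set.Ioi (0:ℝ), K s)) :=
    (A3.neg).add (A2.const_mul α)
  have := tendsto_nhds_unique A1 (T.congr (fun n => (eqn n).symm))
  rw [this, neg_zero, zero_add]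


lemma fracD_le {α : ℝ} (hα : 0 < α) (hα1 : α < 1) {ψ : ℝ → ℝ} {C M : ℝ}
    (h1 : ContDiff ℝ 1 ψ) (hM : ∀ x, |ψ x| ≤ M) (hC : ∀ x, |deriv ψ x| ≤ C) (ξ : ℝ)
    (hmin : ∀ s, 0 < s → ψ ξ ≤ ψ (ξ - s)) : fracD α ψ ξ ≤ 0 := by
  have hΓ : 0 < Real.Gamma (1 - α) := Real.Gamma_pos_of_pos (by linarith)
  rw [fracD]
  by_cases hint : IntegrableOn (fun s => deriv ψ (ξ - s) / s ^ α) (Set.Ioi (0:ℝ))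
  · rw [ibp hα hα1 h1 hM hC ξ hint]
    have hnp : ∫ s in Set.Ioi (0:ℝ), (ψ ξ - ψ (ξ - s)) * s ^ (-1-α) ≤ 0 := by
      apply setIntegral_nonpos measurableSet_Ioi
      intro s hs
      have := hmin s hs
      have h2 : ψ ξ - ψ (ξ - s) ≤ 0 := by linarith
      exact mul_nonpos_of_nonpos_of_nonneg h2 (Real.rpow_nonneg (le_of_lt hs) _)
    have : α * ∫ s in Set.Ioi (0:ℝ), (ψ ξ - ψ (ξ - s)) * s ^ (-1-α) ≤ 0 :=
      mul_nonpos_of_nonneg_of_nonpos hα.le hnp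
    exact mul_nonpos_of_nonneg_of_nonpos (by positivity) this
  · rw [MeasureTheory.integral_undef hint]
    simp

/-- Second derivative is nonnegative at a global minimum of a `C²` function. -/
lemma deriv2_nonneg {f : ℝ → ℝ} (hf : ContDiff ℝ 2 f) {x : ℝ}
    (hmin : ∀ y, f x ≤ f y) : 0 ≤ deriv (deriv f) x := by
  by_contra hcon
  push_neg at hcon
  have hd1 : Differentiable ℝ f := hf.differentiable two_ne_zero
  have hdc : ContDiff ℝ 1 (deriv f) := by
    have h := (contDiff_succ_iff_deriv (n := 1)).mp (by norm_num at hf ⊢; exact hf)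
    exact h.2.2
  have hd2c : Continuous (deriv (deriv f)) := hdc.continuous_deriv le_rfl
  have hd1' : Differentiable ℝ (deriv f) := hdc.differentiable one_ne_zero
  have hloc : IsLocalMin f x := Filter.Eventually.of_forall hmin
  have hder0 : deriv f x = 0 := hloc.deriv_eq_zero
  have hev : ∀ᶠ y in nhds x, deriv (deriv f) y < 0 :=
    hd2c.continuousAt.eventually_lt_const hcon
  obtain ⟨ε, hε, hball⟩ := Metric.eventually_nhds_iff.mp hev
  set δ := ε / 2 with hδ
  have hδpos : 0 < δ := by positivity
  have hneg : ∀ y ∈ Set.Icc x (x + δ), deriv (deriv f) y < 0 := by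
    intro y hy
    apply hball
    rw [Real.dist_eq, abs_lt]
    constructor <;> [linarith [hy.1]; linarith [hy.2, hε]]
  have hanti1 : StrictAntiOn (deriv f) (Set.Icc x (x + δ)) := by
    apply strictAntiOn_of_deriv_neg (convex_Icc _ _) (hdc.continuous.continuousOn)
    intro y hy
    rw [interior_Icc] at hy
    exact hneg y ⟨hy.1.le, hy.2.le⟩
  have hderneg : ∀ y ∈ Set.Ioo x (x + δ), deriv f y < 0 := by
    intro y hy
    have := hanti1 (Set.left_mem_Icc.mpr (by linarith)) ⟨hy.1.le, hy.2.le⟩ hy.1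
    rwa [hder0] at this
  have hanti2 : StrictAntiOn f (Set.Icc x (x + δ)) := by
    apply strictAntiOn_of_deriv_neg (convex_Icc _ _) (hd1.continuous.continuousOn)
    intro y hy
    rw [interior_Icc] at hy
    exact hderneg y hy
  have := hanti2 (Set.left_mem_Icc.mpr (by linarith))
    (Set.right_mem_Icc.mpr (by linarith)) (by linarith)
  exact absurd (hmin (x + δ)) (by linarith)


/-- Integrability of the fractional-derivative integrand is independent of the base point. -/
lemma integrable_shift {α : ℝ} (hα : 0 < α) (hα1 : α < 1) {ψ : ℝ → ℝ} {C : ℝ}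
    (hdψ : Continuous (deriv ψ)) (hC : ∀ x, |deriv ψ x| ≤ C) (ξ1 ξ2 : ℝ)
    (h : IntegrableOn (fun s => deriv ψ (ξ1 - s) / s ^ α) (Set.Ioi (0:ℝ))) :
    IntegrableOn (fun s => deriv ψ (ξ2 - s) / s ^ α) (Set.Ioi (0:ℝ)) := by
  set d := ξ1 - ξ2 with hd
  set X := |d| + 1 with hX
  have hX0 : (0:ℝ) < X := by positivity
  have hmeas : ∀ (ξ : ℝ) (t : Set ℝ), AEStronglyMeasurable
      (fun s => deriv ψ (ξ - s) / s ^ α) (volume.restrict t) := by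
    intro ξ t
    exact (((hdψ.comp (continuous_const.sub continuous_id)).measurable).div
      (measurable_id.pow_const α)).aestronglyMeasurable.restrict
  rw [← Set.Ioc_union_Ioi_eq_Ioi hX0.le]
  refine MeasureTheory.IntegrableOn.union ?_ ?_
  · -- on (0, X] bounded by C * s^(-α)
    have hint : IntegrableOn (fun s : ℝ => C * s ^ (-α)) (Set.Ioc (0:ℝ) X) := by
      have h1 : IntervalIntegrable (fun x : ℝ => x ^ (-α)) volume 0 X :=
        intervalIntegral.intervalIntegrable_rpow' (by linarith)
      rw [intervalIntegrable_iff_integrableOn_Ioc_of_le hX0.le] at h1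
      exact h1.const_mul C
    refine hint.mono' (hmeas _ _) ?_
    filter_upwards [ae_restrict_mem measurableSet_Ioc] with s hs
    have hs0 : (0:ℝ) < s := hs.1
    have hsα : (0:ℝ) < s ^ α := Real.rpow_pos_of_pos hs0 α
    rw [Real.norm_eq_abs, abs_div, abs_of_pos hsα, div_eq_mul_inv,
      ← Real.rpow_neg hs0.le]
    exact mul_le_mul_of_nonneg_right (hC _) (Real.rpow_nonneg hs0.le _)
  · -- on (X, ∞) compare with the integrand at ξ1 shifted
    have hsub : Set.Ioi (X + d) ⊆ Set.Ioi (0:ℝ) := by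
      apply Set.Ioi_subset_Ioi
      have := abs_nonneg d
      have := neg_abs_le d
      linarith
    have h1 : IntegrableOn (fun s => deriv ψ (ξ1 - s) / s ^ α) (Set.Ioi (X + d)) :=
      h.mono_set hsub
    have h2 : IntegrableOn (fun s => deriv ψ (ξ1 - (s + d)) / (s + d) ^ α)
        (Set.Ioi X) := by
      have hemb : MeasurableEmbedding (fun s : ℝ => s + d) :=
        (Homeomorph.addRight d).measurableEmbedding
      have hmp : MeasurePreserving (fun s : ℝ => s + d) volume volume :=
        measurePreserving_add_right volume d
      have hpre : (fun s : ℝ => s + d) ⁻¹' (Set.Ioi (X + d)) = Set.Ioi X := by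
        ext s; simp [Set.mem_Ioi]
      have := (hmp.integrableOn_comp_preimage hemb
        (f := fun s => deriv ψ (ξ1 - s) / s ^ α) (s := Set.Ioi (X + d))).mpr h1
      rw [hpre] at this
      exact this
    refine ((h2.norm.const_mul ((1 + |d|) ^ α)).mono' (hmeas _ _)) ?_
    filter_upwards [ae_restrict_mem measurableSet_Ioi] with s hs
    have hs1 : (1:ℝ) ≤ s := by
      have := abs_nonneg d; simp only [Set.mem_Ioi] at hs; linarith
    have hs0 : (0:ℝ) < s := lt_of_lt_of_le one_pos hs1
    have hsd : (0:ℝ) < s + d := by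
      have := neg_abs_le d
      simp only [Set.mem_Ioi] at hs
      linarith
    have hkey : (s + d) ^ α ≤ (1 + |d|) ^ α * s ^ α := by
      rw [← Real.mul_rpow (by positivity) hs0.le]
      apply Real.rpow_le_rpow hsd.le ?_ hα.le
      have h3 : d ≤ |d| := le_abs_self d
      nlinarith [abs_nonneg d]
    have hA : (0:ℝ) ≤ |deriv ψ (ξ1 - (s + d))| := abs_nonneg _
    rw [Real.norm_eq_abs, show ξ2 - s = ξ1 - (s + d) by rw [hd]; ring, abs_div,
      abs_of_pos (Real.rpow_pos_of_pos hs0 α)]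
    rw [Real.norm_eq_abs, abs_div, abs_of_pos (Real.rpow_pos_of_pos hsd α)]
    rw [div_le_iff₀ (Real.rpow_pos_of_pos hs0 α), mul_comm ((1 + |d|) ^ α),
      mul_assoc, div_mul_eq_mul_div, le_div_iff₀ (Real.rpow_pos_of_pos hsd α)]
    calc |deriv ψ (ξ1 - (s + d))| * (s + d) ^ α
        ≤ |deriv ψ (ξ1 - (s + d))| * ((1 + |d|) ^ α * s ^ α) :=
          mul_le_mul_of_nonneg_left hkey hA
      _ = |deriv ψ (ξ1 - (s + d))| * ((1 + |d|) ^ α * s ^ α) := rfl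

/-- Grönwall-type propagation of zeroes to the left for `ψ'' ≤ κ² ψ`. -/
lemma gronwall_zero {ψ : ℝ → ℝ} {κ : ℝ} (hκ : 0 < κ) (h2 : ContDiff ℝ 2 ψ)
    (hpos : ∀ x, 0 ≤ ψ x) (hloc : ∀ x, deriv (deriv ψ) x ≤ κ ^ 2 * ψ x)
    {b : ℝ} (hb : ψ b = 0) : ∀ x ∈ Set.Icc (b - 1/κ) b, ψ x = 0 := by
  have hd1 : Differentiable ℝ ψ := h2.differentiable two_ne_zero
  have hdc : ContDiff ℝ 1 (deriv ψ) := by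
    have h := (contDiff_succ_iff_deriv (n := 1)).mp (by norm_num at h2 ⊢; exact h2)
    exact h.2.2
  have hd2c : Continuous (deriv (deriv ψ)) := hdc.continuous_deriv le_rfl
  have hd1' : Differentiable ℝ (deriv ψ) := hdc.differentiable one_ne_zero
  have hder0 : deriv ψ b = 0 := by
    have hloc' : IsLocalMin ψ b := Filter.Eventually.of_forall (by
      intro y; rw [hb]; exact hpos y)
    exact hloc'.deriv_eq_zero
  set T := 1/κ with hT
  have hTpos : 0 < T := by positivity
  -- maximum on the interval
  obtain ⟨xm, hxm_mem, hxm⟩ := isCompact_Icc.exists_isMaxOn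
    (Set.nonempty_Icc.mpr (by linarith)) (h2.continuous.continuousOn
      (s := Set.Icc (b - T) b))
  set M := ψ xm with hM
  have hM0 : 0 ≤ M := hpos xm
  have hMb : ∀ y ∈ Set.Icc (b - T) b, ψ y ≤ M := fun y hy => hxm hy
  -- derivative bound : for t in [b-T,b], -deriv ψ t ≤ κ² M (b - t)
  have hderiv_bound : ∀ t ∈ Set.Icc (b - T) b, -(κ ^ 2 * M * (b - t)) ≤ deriv ψ t := by
    intro t ht
    have htb : t ≤ b := ht.2
    have hFTC : ∫ r in t..b, deriv (deriv ψ) r = deriv ψ b - deriv ψ t := by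
      apply intervalIntegral.integral_eq_sub_of_hasDerivAt
      · intro r _; exact (hd1' r).hasDerivAt
      · exact hd2c.intervalIntegrable t b
    have hmono : ∫ r in t..b, deriv (deriv ψ) r ≤ ∫ r in t..b, κ ^ 2 * M := by
      apply intervalIntegral.integral_mono_on htb (hd2c.intervalIntegrable t b)
        (intervalIntegrable_const)
      intro r hr
      calc deriv (deriv ψ) r ≤ κ ^ 2 * ψ r := hloc r
        _ ≤ κ ^ 2 * M := by
            apply mul_le_mul_of_nonneg_left ?_ (by positivity)
            exact hMb r ⟨by linarith [hr.1, ht.1], hr.2⟩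
    rw [hFTC, hder0, intervalIntegral.integral_const, smul_eq_mul] at hmono
    linarith
  -- integrate again : ψ t ≤ κ² M (b-t)²/2
  have hbound : ∀ t ∈ Set.Icc (b - T) b, ψ t ≤ κ ^ 2 * M * (b - t) ^ 2 / 2 := by
    intro t ht
    have htb : t ≤ b := ht.2
    have hFTC : ∫ r in t..b, deriv ψ r = ψ b - ψ t := by
      apply intervalIntegral.integral_eq_sub_of_hasDerivAt
      · intro r _; exact (hd1 r).hasDerivAt
      · exact (hdc.continuous).intervalIntegrable t b
    have hmono : ∫ r in t..b, -(κ ^ 2 * M * (b - r)) ≤ ∫ r in t..b, deriv ψ r := by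
      apply intervalIntegral.integral_mono_on htb ?_ ((hdc.continuous).intervalIntegrable t b)
      · intro r hr
        exact hderiv_bound r ⟨by linarith [hr.1, ht.1], hr.2⟩
      · exact (Continuous.intervalIntegrable (by continuity) t b)
    have hcomp : ∫ r in t..b, -(κ ^ 2 * M * (b - r)) = -(κ ^ 2 * M * (b - t) ^ 2 / 2) := by
      have hderivq : ∀ r ∈ Set.uIcc t b, HasDerivAt
          (fun r => κ ^ 2 * M * (b - r) ^ 2 / 2) (-(κ ^ 2 * M * (b - r))) r := by
        intro r _
        have h1 : HasDerivAt (fun r : ℝ => b - r) (-1) r := by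
          simpa using (hasDerivAt_id r).const_sub b
        have h2 : HasDerivAt (fun r : ℝ => (b - r) ^ 2) (2 * (b - r) * (-1)) r := by
          simpa using (h1.fun_pow 2)
        have h3 := (h2.const_mul (κ ^ 2 * M)).div_const 2
        convert h3 using 1
        · rfl
        · rfl
        ring
      have := intervalIntegral.integral_eq_sub_of_hasDerivAt hderivq
        (Continuous.intervalIntegrable (by continuity) t b)
      rw [this]
      ring
    rw [hFTC, hcomp, hb] at hmono
    linarith
  -- conclude M = 0
  have hMle : M ≤ M / 2 := by
    have := hbound xm hxm_mem
    have h1 : (b - xm) ^ 2 ≤ T ^ 2 := by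
      have h2 := hxm_mem.1
      have h3 := hxm_mem.2
      nlinarith
    have h4 : κ ^ 2 * M * (b - xm) ^ 2 / 2 ≤ κ ^ 2 * M * T ^ 2 / 2 := by
      have : κ ^ 2 * M * (b - xm) ^ 2 ≤ κ ^ 2 * M * T ^ 2 :=
        mul_le_mul_of_nonneg_left h1 (by positivity)
      linarith
    have h5 : κ ^ 2 * T ^ 2 = 1 := by
      rw [hT]; field_simp
    calc M ≤ κ ^ 2 * M * (b - xm) ^ 2 / 2 := this
      _ ≤ κ ^ 2 * M * T ^ 2 / 2 := h4
      _ = M / 2 := by nlinarith [h5]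
  have hM0' : M = 0 := by linarith
  intro x hx
  have := hMb x hx
  have := hpos x
  linarith [hM0' ▸ this]

end MaxPrinAux

open MaxPrinAux

/-- Maximum principle for `L ψ := ψ'' - c^α ∂^α_ξ ψ - κ² ψ`: if `Lψ ≤ 0` on ℝ and
`liminf_{ξ→-∞} ψ ≥ 0`, `limsup_{ξ→+∞} ψ ≥ 0`, then `ψ ≥ 0`; moreover if `ψ(ξ*) = 0`
for some `ξ*`, then `ψ ≡ 0` on `(-∞, ξ*]`. -/
theorem maximum_principle
    (α c κ : ℝ) (hα : α ∈ Set.Ioo (0 : ℝ) 1) (hc : 0 < c) (hκ : 0 < κ)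
    (ψ : ℝ → ℝ) (hψ1 : C1b ψ) (hψ2 : ContDiff ℝ 2 ψ)
    (hL : ∀ ξ, deriv (deriv ψ) ξ - c ^ α * fracD α ψ ξ - κ ^ 2 * ψ ξ ≤ 0)
    (hbot : 0 ≤ Filter.liminf ψ atBot) (htop : 0 ≤ Filter.limsup ψ atTop) :
    (∀ ξ, 0 ≤ ψ ξ) ∧ ∀ ξs : ℝ, ψ ξs = 0 → ∀ ξ ≤ ξs, ψ ξ = 0 := by
  obtain ⟨hα0, hα1⟩ := hα
  obtain ⟨h1, ⟨M, hM⟩, ⟨C, hC⟩⟩ := hψ1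
  have hdiff : Differentiable ℝ ψ := h1.differentiable one_ne_zero
  have hψc : Continuous ψ := h1.continuous
  have hdψc : Continuous (deriv ψ) := h1.continuous_deriv le_rfl
  have hdcψ : ContDiff ℝ 1 (deriv ψ) := by
    have h := (contDiff_succ_iff_deriv (n := 1)).mp (by norm_num at hψ2 ⊢; exact hψ2)
    exact h.2.2
  have hcα : 0 < c ^ α := Real.rpow_pos_of_pos hc α
  have hΓ : 0 < Real.Gamma (1 - α) := Real.Gamma_pos_of_pos (by linarith)
  set β := κ / 2 with hβ_def
  have hβ : 0 < β := by positivity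
  have hexp1 : ∀ (c' x : ℝ), HasDerivAt (fun y => c' * Real.exp (β * y))
      (c' * β * Real.exp (β * x)) x := by
    intro c' x
    have e1 : HasDerivAt (fun y : ℝ => β * y) β x := by
      simpa using (hasDerivAt_id x).const_mul β
    have e2 : HasDerivAt (fun y : ℝ => Real.exp (β * y)) (Real.exp (β * x) * β) x :=
      (Real.hasDerivAt_exp (β * x)).comp x e1
    have e3 := e2.const_mul c'
    convert e3 using 1
    · rfl
    · rfl
    ring
  have hpos : ∀ ξ, 0 ≤ ψ ξ := by
    intro ξ
    by_contra hneg
    push_neg at hneg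
    set E := Real.exp (β * ξ) with hE_def
    have hE : 0 < E := Real.exp_pos _
    set ε := -ψ ξ / (2 * E) with hε_def
    have hε : 0 < ε := div_pos (by linarith) (by positivity)
    have hεE : ε * E = -ψ ξ / 2 := by
      rw [hε_def]; field_simp
    set w : ℝ → ℝ := fun x => ψ x + ε * Real.exp (β * x) with hw_def
    have hwc : Continuous w := hψc.add
      (continuous_const.mul (Real.continuous_exp.comp (continuous_const.mul continuous_id)))
    have hwx0 : w ξ < 0 := by
      have : w ξ = ψ ξ + ε * E := rfl
      rw [this, hεE]; linarith
    -- behaviour at -∞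
    have hbdd : IsBoundedUnder (· ≥ ·) atBot ψ :=
      isBoundedUnder_of ⟨-M, fun x => (abs_le.mp (hM x)).1⟩
    have hevbot : ∀ᶠ x in atBot, w ξ < ψ x :=
      eventually_lt_of_lt_liminf (lt_of_lt_of_le hwx0 hbot) hbdd
    obtain ⟨A, hA⟩ := eventually_atBot.mp hevbot
    -- behaviour at +∞
    have t1 : Tendsto (fun x : ℝ => β * x) atTop atTop :=
      Tendsto.const_mul_atTop hβ tendsto_id
    have t2 : Tendsto (fun x : ℝ => Real.exp (β * x)) atTop atTop :=
      Real.tendsto_exp_atTop.comp t1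
    have t3 : Tendsto (fun x : ℝ => ε * Real.exp (β * x)) atTop atTop :=
      t2.const_mul_atTop hε
    have t4 : Tendsto (fun x : ℝ => -M + ε * Real.exp (β * x)) atTop atTop :=
      tendsto_atTop_add_const_left _ (-M) t3
    have htend : Tendsto w atTop atTop := by
      apply tendsto_atTop_mono ?_ t4
      intro x
      have := (abs_le.mp (hM x)).1
      simp only [hw_def]
      linarith
    obtain ⟨B, hB⟩ := eventually_atTop.mp (htend.eventually_gt_atTop (w ξ))
    set A' := min A ξ with hA'_def
    set B' := max B ξ with hB'_def
    have hmem : ξ ∈ Set.Icc A' B' := ⟨min_le_right _ _, le_max_right _ _⟩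
    obtain ⟨ξ0, hξ0mem, hξ0min⟩ := isCompact_Icc.exists_isMinOn ⟨ξ, hmem⟩
      (hwc.continuousOn)
    have hξ0le : w ξ0 ≤ w ξ := (isMinOn_iff.mp hξ0min) ξ hmem
    have hglobal : ∀ y, w ξ0 ≤ w y := by
      intro y
      rcases lt_or_ge y A' with h | h
      · have h2 : y ≤ A := le_trans h.le (min_le_left _ _)
        have h4 := hA y h2
        have h3 : ψ y < w y := by
          simp only [hw_def]
          have h5 : 0 < ε * Real.exp (β * y) := by positivity
          linarith
        linarith
      · rcases le_or_gt y B' with h2 | h2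
        · exact (isMinOn_iff.mp hξ0min) y ⟨h, h2⟩
        · have h3 : B ≤ y := le_trans (le_max_left _ _) h2.le
          have := hB y h3
          linarith
    have hw2 : ContDiff ℝ 2 w := hψ2.add
      (contDiff_const.mul (Real.contDiff_exp.comp (contDiff_const.mul contDiff_id)))
    have h2w : 0 ≤ deriv (deriv w) ξ0 := deriv2_nonneg hw2 hglobal
    have hwderiv : deriv w = fun x => deriv ψ x + ε * β * Real.exp (β * x) := by
      funext x
      exact ((hdiff x).hasDerivAt.add (hexp1 ε x)).deriv
    have hD2 : deriv (deriv w) ξ0 = deriv (deriv ψ) ξ0 + ε * β * β * Real.exp (β * ξ0) := by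
      rw [hwderiv]
      have hdd : DifferentiableAt ℝ (deriv ψ) ξ0 := (hdcψ.differentiable one_ne_zero) ξ0
      have := (hdd.hasDerivAt.add (hexp1 (ε * β) ξ0)).deriv
      exact this
    have hminψ : ∀ s, 0 < s → ψ ξ0 ≤ ψ (ξ0 - s) := by
      intro s hs
      have hgl := hglobal (ξ0 - s)
      have hee : Real.exp (β * (ξ0 - s)) ≤ Real.exp (β * ξ0) := by
        apply Real.exp_le_exp.mpr
        nlinarith
      have hmul : ε * Real.exp (β * (ξ0 - s)) ≤ ε * Real.exp (β * ξ0) :=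
        mul_le_mul_of_nonneg_left hee hε.le
      simp only [hw_def] at hgl
      linarith
    have hfrac : fracD α ψ ξ0 ≤ 0 := fracD_le hα0 hα1 h1 hM hC ξ0 hminψ
    have hLξ0 := hL ξ0
    have h5 : 0 ≤ -(c ^ α * fracD α ψ ξ0) := by nlinarith
    have hE0 : 0 < Real.exp (β * ξ0) := Real.exp_pos _
    have hwneg : w ξ0 < 0 := lt_of_le_of_lt hξ0le hwx0
    have hψval : ψ ξ0 = w ξ0 - ε * Real.exp (β * ξ0) := by
      simp only [hw_def]; ring
    have hP : 0 < ε * Real.exp (β * ξ0) := by positivity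
    have hκ2 : κ ^ 2 * ψ ξ0 = κ ^ 2 * w ξ0 - κ ^ 2 * (ε * Real.exp (β * ξ0)) := by
      rw [hψval]; ring
    have hββ : ε * β * β * Real.exp (β * ξ0) = (κ ^ 2 / 4) * (ε * Real.exp (β * ξ0)) := by
      rw [hβ_def]; ring
    have hd2ψ : deriv (deriv ψ) ξ0 ≥ -((κ ^ 2 / 4) * (ε * Real.exp (β * ξ0))) := by
      have := hD2
      nlinarith
    have hterm1 : 0 < κ ^ 2 * (ε * Real.exp (β * ξ0)) := by positivity
    have hterm2 : κ ^ 2 * w ξ0 < 0 := mul_neg_of_pos_of_neg (by positivity) hwneg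
    linarith
  refine ⟨hpos, ?_⟩
  intro ξs hξs
  by_cases hint : IntegrableOn (fun s => deriv ψ (ξs - s) / s ^ α) (Set.Ioi (0:ℝ))
  · -- IBP case
    intro ξ hξ
    rcases eq_or_lt_of_le hξ with rfl | hlt
    · exact hξs
    by_contra hne
    have hψξpos : 0 < ψ ξ := lt_of_le_of_ne (hpos ξ) (Ne.symm hne)
    have hminψ : ∀ y, ψ ξs ≤ ψ y := by intro y; rw [hξs]; exact hpos y
    have h2ψ : 0 ≤ deriv (deriv ψ) ξs := deriv2_nonneg hψ2 hminψ
    set I := ∫ s in Set.Ioi (0:ℝ), (ψ ξs - ψ (ξs - s)) * s ^ (-1-α) with hI_def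
    have hibp := ibp hα0 hα1 h1 hM hC ξs hint
    have hLs := hL ξs
    rw [fracD, hibp, ← hI_def] at hLs
    have hzero : κ ^ 2 * ψ ξs = 0 := by rw [hξs]; ring
    rw [hzero] at hLs
    have hXeq : c ^ α * (1 / Real.Gamma (1 - α) * (α * I))
        = (c ^ α * (1 / Real.Gamma (1 - α) * α)) * I := by ring
    rw [hXeq] at hLs
    have hInonneg : 0 ≤ I := by
      have hcoeff : 0 < c ^ α * (1 / Real.Gamma (1 - α) * α) := by positivity
      by_contra hIneg
      push_neg at hIneg
      have := mul_neg_of_pos_of_neg hcoeff hIneg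
      linarith
    -- the kernel integral
    have hK_int : IntegrableOn (fun s => (ψ ξs - ψ (ξs - s)) * s ^ (-1-α)) (Set.Ioi (0:ℝ)) :=
      integrableOn_diff_kernel hα0 hα1 h1 hM hC ξs
    have hK2 : IntegrableOn (fun s => ψ (ξs - s) * s ^ (-1-α)) (Set.Ioi (0:ℝ)) := by
      refine MeasureTheory.IntegrableOn.congr_fun hK_int.neg ?_ measurableSet_Ioi
      intro s _
      simp only [Pi.neg_apply, hξs]
      ring
    have hIeq : I = -∫ s in Set.Ioi (0:ℝ), ψ (ξs - s) * s ^ (-1-α) := by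
      rw [hI_def, ← MeasureTheory.integral_neg]
      apply MeasureTheory.setIntegral_congr_fun measurableSet_Ioi
      intro s _
      rw [hξs]; ring
    have hIle : ∫ s in Set.Ioi (0:ℝ), ψ (ξs - s) * s ^ (-1-α) ≤ 0 := by
      have h6 := hInonneg
      rw [hIeq] at h6
      linarith
    -- positivity on a small interval
    obtain ⟨s0, hs0_def, hs0⟩ : ∃ s0, s0 = ξs - ξ ∧ 0 < s0 :=
      ⟨ξs - ξ, rfl, by linarith⟩
    obtain ⟨δ, hδpos, hδ⟩ := Metric.continuousAt_iff.mp (hψc.continuousAt (x := ξ))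
      (ψ ξ / 2) (by positivity)
    obtain ⟨δ', hδ'pos, hδ'd, hδ's⟩ : ∃ δ', 0 < δ' ∧ δ' ≤ δ ∧ δ' ≤ s0 :=
      ⟨min δ s0, lt_min hδpos hs0, min_le_left _ _, min_le_right _ _⟩
    obtain ⟨a1, ha1_def⟩ : ∃ a1 : ℝ, a1 = s0 - δ' / 2 := ⟨_, rfl⟩
    obtain ⟨b1, hb1_def⟩ : ∃ b1 : ℝ, b1 = s0 + δ' / 2 := ⟨_, rfl⟩
    have ha1pos : 0 < a1 := by rw [ha1_def]; linarith
    have hb1pos : 0 < b1 := by rw [hb1_def]; linarith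
    have hlower : ∀ s ∈ Set.Icc a1 b1, ψ ξ / 2 ≤ ψ (ξs - s) := by
      intro s hs
      have hle1 : a1 ≤ s := hs.1
      have hle2 : s ≤ b1 := hs.2
      have hdist : dist (ξs - s) ξ < δ := by
        rw [Real.dist_eq]
        have h7 : ξs - s - ξ = s0 - s := by rw [hs0_def]; ring
        rw [h7, abs_lt]
        constructor
        · linarith [ha1_def, hb1_def]
        · linarith [ha1_def, hb1_def]
      have h8 := hδ hdist
      rw [Real.dist_eq, abs_lt] at h8
      linarith [h8.1]
    have hsub : Set.Icc a1 b1 ⊆ Set.Ioi (0:ℝ) := by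
      intro s hs
      exact lt_of_lt_of_le ha1pos hs.1
    have hmono : ∫ s in Set.Icc a1 b1, ψ (ξs - s) * s ^ (-1-α)
        ≤ ∫ s in Set.Ioi (0:ℝ), ψ (ξs - s) * s ^ (-1-α) := by
      apply MeasureTheory.setIntegral_mono_set hK2 ?_ (HasSubset.Subset.eventuallyLE hsub)
      filter_upwards [ae_restrict_mem measurableSet_Ioi] with s hs
      exact mul_nonneg (hpos _) (Real.rpow_nonneg (le_of_lt hs) _)
    set c0 := ψ ξ / 2 * b1 ^ (-1-α) with hc0_def
    have hc0pos : 0 < c0 := by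
      apply mul_pos (by positivity) (Real.rpow_pos_of_pos hb1pos _)
    have hconst : c0 * (volume (Set.Icc a1 b1)).toReal
        ≤ ∫ s in Set.Icc a1 b1, ψ (ξs - s) * s ^ (-1-α) := by
      rw [mul_comm, ← smul_eq_mul, ← measureReal_def]
      apply MeasureTheory.setIntegral_ge_of_const_le measurableSet_Icc
        (by simp [Real.volume_Icc]) ?_ (hK2.mono_set hsub)
      intro s hs
      have hspos : 0 < s := lt_of_lt_of_le ha1pos hs.1
      have hrpow : b1 ^ (-1-α) ≤ s ^ (-1-α) :=
        Real.rpow_le_rpow_of_nonpos hspos hs.2 (by linarith)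
      calc c0 = ψ ξ / 2 * b1 ^ (-1-α) := rfl
        _ ≤ ψ ξ / 2 * s ^ (-1-α) :=
            mul_le_mul_of_nonneg_left hrpow (by positivity)
        _ ≤ ψ (ξs - s) * s ^ (-1-α) :=
            mul_le_mul_of_nonneg_right (hlower s hs) (Real.rpow_nonneg hspos.le _)
    have hvol : (volume (Set.Icc a1 b1)).toReal = δ' := by
      rw [Real.volume_Icc]
      rw [ENNReal.toReal_ofReal (by simp only [ha1_def, hb1_def]; linarith)]
      simp only [ha1_def, hb1_def]; ring
    rw [hvol] at hconst
    have hprod : 0 < c0 * δ' := mul_pos hc0pos hδ'pos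
    linarith
  · -- non-integrable case : fracD vanishes identically
    have hfrac0 : ∀ x, fracD α ψ x = 0 := by
      intro x
      rw [fracD]
      have hni : ¬ IntegrableOn (fun s => deriv ψ (x - s) / s ^ α) (Set.Ioi (0:ℝ)) := by
        intro hcon
        exact hint (integrable_shift hα0 hα1 hdψc hC x ξs hcon)
      rw [MeasureTheory.integral_undef hni, mul_zero]
    have hloc : ∀ x, deriv (deriv ψ) x ≤ κ ^ 2 * ψ x := by
      intro x
      have := hL x
      rw [hfrac0 x] at this
      linarith
    have hstep : ∀ n : ℕ, ψ (ξs - n * (1/κ)) = 0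
        ∧ ∀ x ∈ Set.Icc (ξs - n * (1/κ)) ξs, ψ x = 0 := by
      intro n
      induction n with
      | zero =>
        refine ⟨by simpa using hξs, ?_⟩
        intro x hx
        simp only [Nat.cast_zero, zero_mul, sub_zero] at hx
        have : x = ξs := le_antisymm hx.2 hx.1
        rw [this]; exact hξs
      | succ n ih =>
        obtain ⟨ih0, ih1⟩ := ih
        have hg := gronwall_zero hκ hψ2 hpos hloc ih0
        have hκinv : 0 < 1/κ := by positivity
        constructor
        · apply hg
          constructor
          · push_cast; linarith
          · push_cast; linarith
        · intro x hx
          rcases le_or_gt (ξs - n * (1/κ)) x with h | h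
          · exact ih1 x ⟨h, hx.2⟩
          · apply hg
            refine ⟨?_, h.le⟩
            have := hx.1
            push_cast at this ⊢
            linarith
    intro ξ hξ
    obtain ⟨n, hn⟩ := exists_nat_ge ((ξs - ξ) * κ)
    have hle : ξs - n * (1/κ) ≤ ξ := by
      have h2 := mul_le_mul_of_nonneg_right hn (le_of_lt (inv_pos.mpr hκ))
      rw [mul_assoc, mul_inv_cancel₀ hκ.ne', mul_one] at h2
      rw [one_div]
      linarith
    exact (hstep n).2 ξ ⟨hle, hξ⟩
end

section
/- Let α ∈ (0,1), r > 0, c > 0, and let V(λ) := λ² - (cλ)^α + r for λ > 0, with c*_α := (2^{1/α}/√α) · (r/(2-α))^{(2-α)/(2α)}. Then: (i) if c > c*_α, V has exactly two positive roots λ₁ < λ₂, and V(λ) < 0 for λ ∈ (λ₁, λ₂); (ii) if c = c*_α, V has a unique positive root; (iii) if 0 < c < c*_α, V has no positive roots, i.e. V(λ) > 0 for all λ > 0. -/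
open Real MeasureTheory Filter Topology

/-- The characteristic function `V(λ) = λ² - (cλ)^α + r`. -/
noncomputable def Vchar (α c r l : ℝ) : ℝ := l ^ 2 - (c * l) ^ α + r

/-- Location of the minimum of `V` on `(0,∞)`. -/
noncomputable def lS (α c : ℝ) : ℝ := (α * c ^ α / 2) ^ ((2 - α)⁻¹)

section helpers

variable {α c r : ℝ}

lemma lS_base_pos (hα0 : 0 < α) (hc : 0 < c) : 0 < α * c ^ α / 2 := by positivity

lemma lS_pos (hα0 : 0 < α) (hc : 0 < c) : 0 < lS α c :=
  Real.rpow_pos_of_pos (lS_base_pos hα0 hc) _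

lemma lS_rpow (hα0 : 0 < α) (hα1 : α < 1) (hc : 0 < c) :
    lS α c ^ (2 - α) = α * c ^ α / 2 :=
  Real.rpow_inv_rpow (lS_base_pos hα0 hc).le (by linarith)

lemma Vchar_eq (hc : 0 < c) {l : ℝ} (hl : 0 ≤ l) :
    Vchar α c r l = l ^ 2 - c ^ α * l ^ α + r := by
  unfold Vchar; rw [Real.mul_rpow hc.le hl]

lemma Vchar_cont (hα0 : 0 < α) : Continuous (Vchar α c r) := by
  unfold Vchar
  refine ((continuous_pow 2).sub ?_).add continuous_const
  refine continuous_iff_continuousAt.mpr fun l => ?_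
  exact (Real.continuousAt_rpow_const _ _ (Or.inr hα0.le)).comp
    ((continuous_const.mul continuous_id).continuousAt)

lemma Vchar_hasDeriv (hα0 : 0 < α) (hα1 : α < 1) (hc : 0 < c) {l : ℝ} (hl : 0 < l) :
    HasDerivAt (Vchar α c r) (l ^ (α - 1) * (2 * l ^ (2 - α) - α * c ^ α)) l := by
  have h1 : HasDerivAt (fun l : ℝ => l ^ 2) (2 * l) l := by
    simpa using hasDerivAt_pow 2 l
  have hcl : (0:ℝ) < c * l := by positivity
  have h2 : HasDerivAt (fun l : ℝ => (c * l) ^ α) (α * (c * l) ^ (α - 1) * (c * 1)) l :=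
    (Real.hasDerivAt_rpow_const (Or.inl hcl.ne')).comp l ((hasDerivAt_id l).const_mul c)
  have h3 := (h1.sub h2).add_const r
  have key : l ^ (α - 1) * (2 * l ^ (2 - α) - α * c ^ α)
      = 2 * l - α * (c * l) ^ (α - 1) * (c * 1) := by
    rw [Real.mul_rpow hc.le hl.le]
    have h4 : l ^ (2 - α) * l ^ (α - 1) = l := by
      rw [← Real.rpow_add hl]; norm_num
    have h5 : c ^ (α - 1) * c = c ^ α := by
      rw [← Real.rpow_add_one hc.ne' (α - 1)]; ring_nf
    linear_combination 2 * h4 + α * l ^ (α - 1) * h5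
  rw [key]
  exact h3

lemma Vchar_anti (hα0 : 0 < α) (hα1 : α < 1) (hc : 0 < c) :
    StrictAntiOn (Vchar α c r) (Set.Icc 0 (lS α c)) := by
  apply strictAntiOn_of_deriv_neg (convex_Icc _ _) (Vchar_cont hα0).continuousOn
  intro x hx
  rw [interior_Icc] at hx
  rw [(Vchar_hasDeriv hα0 hα1 hc hx.1).deriv]
  have h1 : 0 < x ^ (α - 1) := Real.rpow_pos_of_pos hx.1 _
  have h2 : x ^ (2 - α) < lS α c ^ (2 - α) :=
    Real.rpow_lt_rpow hx.1.le hx.2 (by linarith)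
  rw [lS_rpow hα0 hα1 hc] at h2
  have hca : 0 < c ^ α := Real.rpow_pos_of_pos hc α
  exact mul_neg_of_pos_of_neg h1 (by linarith)

lemma Vchar_mono (hα0 : 0 < α) (hα1 : α < 1) (hc : 0 < c) :
    StrictMonoOn (Vchar α c r) (Set.Ici (lS α c)) := by
  apply strictMonoOn_of_deriv_pos (convex_Ici _) (Vchar_cont hα0).continuousOn
  intro x hx
  rw [interior_Ici] at hx
  have hx0 : 0 < x := (lS_pos hα0 hc).trans hx
  rw [(Vchar_hasDeriv hα0 hα1 hc hx0).deriv]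
  have h1 : 0 < x ^ (α - 1) := Real.rpow_pos_of_pos hx0 _
  have h2 : lS α c ^ (2 - α) < x ^ (2 - α) :=
    Real.rpow_lt_rpow (lS_pos hα0 hc).le hx (by linarith)
  rw [lS_rpow hα0 hα1 hc] at h2
  exact mul_pos h1 (by linarith)

lemma Vchar_at_lS (hα0 : 0 < α) (hα1 : α < 1) (hc : 0 < c) :
    Vchar α c r (lS α c) = r - (2 - α) / 2 * (c ^ α * lS α c ^ α) := by
  have hl := lS_pos hα0 hc
  rw [Vchar_eq hc hl.le]
  have h2 : lS α c ^ (2:ℕ) = lS α c ^ ((2:ℝ)) := by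
    rw [← Real.rpow_natCast (lS α c) 2]; norm_num
  have h3 : lS α c ^ ((2:ℝ)) = lS α c ^ (2 - α) * lS α c ^ α := by
    rw [← Real.rpow_add hl]; ring_nf
  rw [h2, h3, lS_rpow hα0 hα1 hc]
  ring

lemma phi_eq (hα0 : 0 < α) (hα1 : α < 1) (hc : 0 < c) :
    c ^ α * lS α c ^ α = (α / 2) ^ (α / (2 - α)) * c ^ (2 * α / (2 - α)) := by
  have h2α : (0:ℝ) < 2 - α := by linarith
  have hca : (0:ℝ) ≤ c ^ α := (Real.rpow_pos_of_pos hc α).le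
  have h1 : lS α c ^ α = (α / 2) ^ (α / (2 - α)) * c ^ (α * ((2 - α)⁻¹ * α)) := by
    unfold lS
    rw [← Real.rpow_mul (lS_base_pos hα0 hc).le]
    have : α * c ^ α / 2 = (α / 2) * c ^ α := by ring
    rw [this, Real.mul_rpow (by positivity) hca, ← Real.rpow_mul hc.le]
    congr 2
    field_simp
  rw [h1, ← mul_assoc, mul_comm (c ^ α), mul_assoc, ← Real.rpow_add hc]
  congr 2
  field_simp
  ring

lemma phi_cStar (hα0 : 0 < α) (hα1 : α < 1) (hr : 0 < r) :
    (α / 2) ^ (α / (2 - α)) * cStar α r ^ (2 * α / (2 - α)) = 2 * r / (2 - α) := by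
  have h2α : (0:ℝ) < 2 - α := by linarith
  have hsq : (0:ℝ) < Real.sqrt α := Real.sqrt_pos.mpr hα0
  have hcS : 0 < cStar α r := by
    unfold cStar; positivity
  have hL : 0 < (α / 2) ^ (α / (2 - α)) * cStar α r ^ (2 * α / (2 - α)) := by positivity
  have hR : 0 < 2 * r / (2 - α) := by positivity
  apply Real.log_injOn_pos (Set.mem_Ioi.2 hL) (Set.mem_Ioi.2 hR)
  rw [Real.log_mul (by positivity) (by positivity), Real.log_rpow (by positivity),
    Real.log_rpow hcS]
  unfold cStar
  rw [Real.log_mul (by positivity) (by positivity), Real.log_div (by positivity) hsq.ne',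
    Real.log_rpow (by norm_num), Real.log_rpow (by positivity), Real.log_sqrt hα0.le,
    Real.log_div hr.ne' h2α.ne', Real.log_div hα0.ne' (by norm_num),
    Real.log_div (by positivity) h2α.ne', Real.log_mul two_ne_zero hr.ne']
  field_simp
  ring

end helpers

/-- Positive roots of `V(λ) = λ² - (cλ)^α + r`: two roots above the critical speed,
one at the critical speed, none below. -/
theorem Vchar_roots (α r c : ℝ) (hα : α ∈ Set.Ioo (0 : ℝ) 1) (hr : 0 < r) (hc : 0 < c) :
    (cStar α r < c → ∃ l₁ l₂ : ℝ, 0 < l₁ ∧ l₁ < l₂ ∧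
      Vchar α c r l₁ = 0 ∧ Vchar α c r l₂ = 0 ∧
      (∀ l : ℝ, 0 < l → Vchar α c r l = 0 → l = l₁ ∨ l = l₂) ∧
      ∀ l ∈ Set.Ioo l₁ l₂, Vchar α c r l < 0) ∧
    (c = cStar α r → ∃! l : ℝ, 0 < l ∧ Vchar α c r l = 0) ∧
    (c < cStar α r → ∀ l : ℝ, 0 < l → 0 < Vchar α c r l) := by
  obtain ⟨hα0, hα1⟩ := hα
  have h2α : (0:ℝ) < 2 - α := by linarith
  set L := lS α c with hLdef
  have hL : 0 < L := lS_pos hα0 hc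
  have hcS : 0 < cStar α r := by
    have := Real.sqrt_pos.mpr hα0
    unfold cStar; positivity
  have hanti : StrictAntiOn (Vchar α c r) (Set.Icc 0 L) := Vchar_anti hα0 hα1 hc
  have hmono : StrictMonoOn (Vchar α c r) (Set.Ici L) := Vchar_mono hα0 hα1 hc
  have hVL : Vchar α c r L
      = r - (2 - α) / 2 * ((α / 2) ^ (α / (2 - α)) * c ^ (2 * α / (2 - α))) := by
    rw [Vchar_at_lS hα0 hα1 hc, phi_eq hα0 hα1 hc]
  have hφpos : (0:ℝ) < (α / 2) ^ (α / (2 - α)) := by positivity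
  have hrk : (2 - α) / 2 * (2 * r / (2 - α)) = r := by field_simp
  have hV0 : Vchar α c r 0 = r := by
    simp [Vchar, Real.zero_rpow hα0.ne']
  refine ⟨?_, ?_, ?_⟩
  · -- supercritical case
    intro hcgt
    have hφ : (α / 2) ^ (α / (2 - α)) * c ^ (2 * α / (2 - α)) > 2 * r / (2 - α) := by
      rw [← phi_cStar hα0 hα1 hr]
      exact mul_lt_mul_of_pos_left
        (Real.rpow_lt_rpow hcS.le hcgt (by positivity)) hφpos
    have hVLneg : Vchar α c r L < 0 := by
      rw [hVL]
      nlinarith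
    -- first root on [0, L]
    obtain ⟨l₁, hl₁mem, hl₁⟩ := intermediate_value_Icc' hL.le
      (Vchar_cont hα0).continuousOn
      (Set.mem_Icc.mpr ⟨hVLneg.le, by rw [hV0]; exact hr.le⟩)
    have hl₁0 : 0 < l₁ := by
      rcases lt_or_eq_of_le hl₁mem.1 with h | h
      · exact h
      · exfalso; rw [← h, hV0] at hl₁; exact hr.ne' hl₁
    have hl₁L : l₁ < L := by
      rcases lt_or_eq_of_le hl₁mem.2 with h | h
      · exact h
      · exfalso; rw [h] at hl₁; exact hVLneg.ne hl₁
    -- second root on [L, B]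
    set B : ℝ := max (max 1 L) (c ^ α + 1) with hBdef
    have hB1 : (1:ℝ) ≤ B := le_trans (le_max_left 1 L) (le_max_left _ _)
    have hBL : L ≤ B := le_trans (le_max_right 1 L) (le_max_left _ _)
    have hBc : c ^ α + 1 ≤ B := le_max_right _ _
    have hca : (0:ℝ) < c ^ α := Real.rpow_pos_of_pos hc α
    have hVB : 0 < Vchar α c r B := by
      rw [Vchar_eq hc (by linarith : (0:ℝ) ≤ B)]
      have h1 : B ^ α ≤ B := by
        have := Real.rpow_le_rpow_of_exponent_le hB1 hα1.le
        rwa [Real.rpow_one] at this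
      have h2 : c ^ α * B ^ α ≤ c ^ α * B := mul_le_mul_of_nonneg_left h1 hca.le
      nlinarith [sq_nonneg B]
    obtain ⟨l₂, hl₂mem, hl₂⟩ := intermediate_value_Icc hBL
      (Vchar_cont hα0).continuousOn
      (Set.mem_Icc.mpr ⟨hVLneg.le, hVB.le⟩)
    have hLl₂ : L < l₂ := by
      rcases lt_or_eq_of_le hl₂mem.1 with h | h
      · exact h
      · exfalso; rw [← h] at hl₂; exact hVLneg.ne hl₂
    refine ⟨l₁, l₂, hl₁0, hl₁L.trans hLl₂, hl₁, hl₂, ?_, ?_⟩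
    · intro l hl hVl
      rcases le_or_gt l L with h | h
      · left
        exact hanti.injOn ⟨hl.le, h⟩ ⟨hl₁0.le, hl₁L.le⟩ (hVl.trans hl₁.symm)
      · right
        exact hmono.injOn (Set.mem_Ici.mpr h.le) (Set.mem_Ici.mpr hLl₂.le)
          (hVl.trans hl₂.symm)
    · intro l hlmem
      obtain ⟨hll₁, hll₂⟩ := hlmem
      rcases le_or_gt l L with h | h
      · have := hanti ⟨hl₁0.le, hl₁L.le⟩ ⟨(hl₁0.trans hll₁).le, h⟩ hll₁
        rwa [hl₁] at this
      · have := hmono (Set.mem_Ici.mpr h.le) (Set.mem_Ici.mpr hLl₂.le) hll₂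
        rwa [hl₂] at this
  · -- critical case
    intro hceq
    have hφ : (α / 2) ^ (α / (2 - α)) * c ^ (2 * α / (2 - α)) = 2 * r / (2 - α) := by
      rw [hceq]; exact phi_cStar hα0 hα1 hr
    have hVL0 : Vchar α c r L = 0 := by
      rw [hVL, hφ, hrk]; ring
    refine ⟨L, ⟨hL, hVL0⟩, ?_⟩
    rintro l ⟨hl, hVl⟩
    by_contra hne
    rcases lt_or_gt_of_ne hne with h | h
    · have := hanti ⟨hl.le, h.le⟩ ⟨hL.le, le_refl L⟩ h
      rw [hVL0, hVl] at this; exact lt_irrefl 0 this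
    · have := hmono (Set.mem_Ici.mpr (le_refl L)) (Set.mem_Ici.mpr h.le) h
      rw [hVL0, hVl] at this; exact lt_irrefl 0 this
  · -- subcritical case
    intro hclt l hl
    have hφ : (α / 2) ^ (α / (2 - α)) * c ^ (2 * α / (2 - α)) < 2 * r / (2 - α) := by
      rw [← phi_cStar hα0 hα1 hr]
      exact mul_lt_mul_of_pos_left
        (Real.rpow_lt_rpow hc.le hclt (by positivity)) hφpos
    have hVLpos : 0 < Vchar α c r L := by
      rw [hVL]; nlinarith
    rcases le_or_gt l L with h | h
    · rcases eq_or_lt_of_le h with h' | h'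
      · rw [h']; exact hVLpos
      · have := hanti ⟨hl.le, h⟩ ⟨hL.le, le_refl L⟩ h'
        exact hVLpos.trans this
    · have := hmono (Set.mem_Ici.mpr (le_refl L)) (Set.mem_Ici.mpr h.le) h
      exact hVLpos.trans this
end
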